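/- Let F be a field of characteristic p and α ∈ F, β ∈ F×. The symbol algebra [α,β)_{p,F} = F⟨x,y : x^p - x = α, y^p = β, yx - xy = y⟩ satisfies [α,β)_{p,F} ≅ [α+β, β)_{p,F}. -/

import Mathlib

open scoped TensorProduct

/-- The defining relations of the symbol `p`-algebra
`[a,b)_{p,F} = F⟨x,y : x^p - x = a, y^p = b, yx - xy = y⟩`. -/
inductive SymbolRel (F : Type) [Field F] (p : ℕ) (a b : F) :
    FreeAlgebra F (Fin 2) → FreeAlgebra F (Fin 2) → Prop
  | x : SymbolRel F p a b (FreeAlgebra.ι F 0 ^ p - FreeAlgebra.ι F 0) (algebraMap F _ a)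
  | y : SymbolRel F p a b (FreeAlgebra.ι F 1 ^ p) (algebraMap F _ b)
  | comm : SymbolRel F p a b
      (FreeAlgebra.ι F 1 * FreeAlgebra.ι F 0 - FreeAlgebra.ι F 0 * FreeAlgebra.ι F 1)
      (FreeAlgebra.ι F 1)

/-- The symbol `p`-algebra `[a,b)_{p,F}`. -/
abbrev SymbolAlg (F : Type) [Field F] (p : ℕ) (a b : F) : Type :=
  RingQuot (SymbolRel F p a b)


open Polynomial

variable {F : Type} [Field F]

/-- Coefficient polynomials: `(x+y)^n = ∑ k, P n k (x) * y^k` when `y*x = x*y + y`. -/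
noncomputable def PP (F : Type) [Field F] : ℕ → ℕ → Polynomial F
  | 0, 0 => 1
  | 0, _+1 => 0
  | n+1, 0 => PP F n 0 * X
  | n+1, k+1 => PP F n (k+1) * (X + ((k : Polynomial F) + 1)) + PP F n k

lemma PP_zero_right (n : ℕ) : PP F n 0 = X ^ n := by
  induction n with
  | zero => rw [PP]; simp
  | succ n ih => rw [PP, ih, pow_succ]

lemma PP_eq_zero : ∀ {n k : ℕ}, n < k → PP F n k = (0 : Polynomial F)
  | 0, k+1, _ => by rw [PP]
  | n+1, k+1, h => by
    rw [PP, PP_eq_zero (show n < k + 1 by omega), PP_eq_zero (show n < k by omega),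
      zero_mul, zero_add]

lemma PP_diag (n : ℕ) : PP F n n = (1 : Polynomial F) := by
  induction n with
  | zero => rw [PP]
  | succ n ih => rw [PP, PP_eq_zero (by omega), ih, zero_mul, zero_add]

/-- Finite difference operator. -/
noncomputable def dd : Polynomial F → Polynomial F := fun f => aeval (X + 1) f - f

lemma dd_add (f g : Polynomial F) : dd (f + g) = dd f + dd g := by
  simp [dd]; ring

lemma dd_nsmul (n : ℕ) (f : Polynomial F) : dd (n • f) = n • dd f := by
  simp [dd, smul_sub]

lemma dd_zero : dd (0 : Polynomial F) = 0 := by simp [dd]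

lemma dd_one : dd (1 : Polynomial F) = 0 := by simp [dd]

lemma dd_iter_zero (k : ℕ) : dd^[k] (0 : Polynomial F) = 0 := by
  induction k with
  | zero => rfl
  | succ k ih => rw [Function.iterate_succ_apply, dd_zero, ih]

lemma dd_X_mul (c : Polynomial F) (h : dd c = 0) (g : Polynomial F) :
    dd ((X + c) * g) = (X + c + 1) * dd g + g := by
  have hc : aeval (X + 1) c = c := by
    have h2 := h; rw [dd, sub_eq_zero] at h2; exact h2
  simp only [dd, map_mul, map_add, aeval_X, aeval_one, hc]
  ring

lemma dd_natCast (n : ℕ) : dd ((n : Polynomial F)) = 0 := by simp [dd]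

lemma dd_iter_X_mul (k : ℕ) (g : Polynomial F) :
    dd^[k+1] (X * g) = (X + ((k : Polynomial F) + 1)) * dd^[k+1] g + (k+1) • dd^[k] g := by
  induction k generalizing g with
  | zero =>
    have := dd_X_mul (0 : Polynomial F) dd_zero g
    simpa using this
  | succ k ih =>
    rw [Function.iterate_succ_apply', ih, dd_add, dd_nsmul,
      show (X + ((k : Polynomial F) + 1)) = X + (((k+1 : ℕ) : Polynomial F)) by push_cast; ring,
      dd_X_mul (((k+1 : ℕ) : Polynomial F)) (dd_natCast _),
      ← Function.iterate_succ_apply' dd (k+1), ← Function.iterate_succ_apply' dd k]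
    simp only [Nat.succ_eq_add_one]
    rw [succ_nsmul (dd^[k+1] g) (k+1)]
    push_cast
    ring

lemma factorial_smul_PP (n k : ℕ) :
    (k.factorial : ℕ) • PP F n k = dd^[k] (X ^ n) := by
  induction n generalizing k with
  | zero =>
    match k with
    | 0 => simp [PP]
    | k+1 =>
      rw [PP, smul_zero, pow_zero, Function.iterate_succ_apply, dd_one, dd_iter_zero]
  | succ n ih =>
    match k with
    | 0 => simp [PP_zero_right]
    | k+1 =>
      rw [PP, smul_add, ← smul_mul_assoc, ih (k+1), Nat.factorial_succ, mul_smul, ih k,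
        show X ^ (n+1) = X * X ^ n by ring, dd_iter_X_mul]
      congr 1
      exact mul_comm _ _

section CharP
variable (p : ℕ) [hp : Fact p.Prime] [CharP F p]

lemma dd_X_pow_char : dd (X ^ p : Polynomial F) = 1 := by
  rw [dd, map_pow, aeval_X, add_pow_char, one_pow, add_sub_cancel_left]

lemma PP_char_one : PP F p 1 = 1 := by
  have h := factorial_smul_PP (F := F) p 1
  rw [Nat.factorial_one, one_smul, Function.iterate_one, dd_X_pow_char] at h
  exact h

lemma PP_char_mid (j : ℕ) (h : j + 2 < p) : PP F p (j + 2) = 0 := by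
  have h1 : ((j+2).factorial : ℕ) • PP F p (j+2) = 0 := by
    rw [factorial_smul_PP, Function.iterate_succ_apply, Function.iterate_succ_apply,
      dd_X_pow_char, dd_one, dd_iter_zero]
  have hf : (((j+2).factorial : ℕ) : F) ≠ 0 := by
    intro hc
    have := (CharP.cast_eq_zero_iff F p _).mp hc
    rw [Nat.Prime.dvd_factorial hp.out] at this
    omega
  rw [nsmul_eq_mul] at h1
  rcases mul_eq_zero.mp h1 with hc | hc
  · exact absurd (by rw [← Polynomial.C_eq_natCast, Polynomial.C_eq_zero] at hc; exact hc) hf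
  · exact hc

end CharP

section Alg
variable {A : Type} [Ring A] [Algebra F A]

lemma pow_mul_gen (x y : A) (h : y * x = x * y + y) (k : ℕ) :
    y ^ k * x = (x + (k : A)) * y ^ k := by
  induction k with
  | zero => simp
  | succ k ih =>
    rw [pow_succ, mul_assoc, h, mul_add, ← mul_assoc, ih]
    push_cast
    noncomm_ring

lemma genExpandPow (x y : A) (h : y * x = x * y + y) (n : ℕ) :
    (x + y) ^ n = ∑ k ∈ Finset.range (n+1), aeval x (PP F n k) * y ^ k := by
  induction n with
  | zero => simp [PP]
  | succ n ih =>
    rw [pow_succ, ih, Finset.sum_mul]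
    have step : ∀ k, (aeval x (PP F n k) * y ^ k) * (x + y)
        = aeval x (PP F n k * (X + (k : Polynomial F))) * y ^ k
          + aeval x (PP F n k) * y ^ (k+1) := by
      intro k
      rw [mul_add, mul_assoc, pow_mul_gen x y h k,
        mul_assoc (aeval x (PP F n k)) (y^k) y, ← pow_succ, ← mul_assoc]
      congr 2
      rw [map_mul, map_add, aeval_X, map_natCast]
    calc (∑ k ∈ Finset.range (n+1), (aeval x (PP F n k) * y ^ k) * (x + y))
        = ∑ k ∈ Finset.range (n+1), (aeval x (PP F n k * (X + (k : Polynomial F))) * y ^ k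
            + aeval x (PP F n k) * y ^ (k+1)) := Finset.sum_congr rfl (fun k _ => step k)
      _ = (∑ k ∈ Finset.range (n+1), aeval x (PP F n k * (X + (k : Polynomial F))) * y ^ k)
            + ∑ k ∈ Finset.range (n+1), aeval x (PP F n k) * y ^ (k+1) :=
          Finset.sum_add_distrib
      _ = ∑ k ∈ Finset.range (n+1+1), aeval x (PP F (n+1) k) * y ^ k := ?_
    rw [Finset.sum_range_succ' (fun k => aeval x (PP F (n+1) k) * y ^ k) (n+1)]
    rw [Finset.sum_range_succ'
      (fun k => aeval x (PP F n k * (X + (k : Polynomial F))) * y ^ k) n]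
    have hext : (∑ k ∈ Finset.range n,
          aeval x (PP F n (k+1) * (X + ((k+1 : ℕ) : Polynomial F))) * y ^ (k+1))
        = ∑ k ∈ Finset.range (n+1),
          aeval x (PP F n (k+1) * (X + ((k+1 : ℕ) : Polynomial F))) * y ^ (k+1) := by
      rw [Finset.sum_range_succ, PP_eq_zero (Nat.lt_succ_self n), zero_mul, map_zero,
        zero_mul, add_zero]
    rw [hext, add_right_comm, ← Finset.sum_add_distrib]
    congr 1
    · refine Finset.sum_congr rfl (fun k _ => ?_)
      rw [PP, map_add, add_mul]
      norm_cast
    · rw [PP]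
      norm_num
end Alg

section Key

lemma key_pow (F : Type) [Field F] {A : Type} [Ring A] [Algebra F A] (p : ℕ) [hp : Fact p.Prime]
    [CharP F p] (x y : A) (h : y * x = x * y + y) : (x + y) ^ p = x ^ p + y ^ p + y := by
  obtain ⟨q, hq⟩ : ∃ q, p = q + 2 := ⟨p - 2, by have := hp.out.two_le; omega⟩
  rw [genExpandPow (F := F) x y h p]
  subst hq
  rw [Finset.sum_range_succ, PP_diag, map_one, one_mul, Finset.sum_range_succ',
    Finset.sum_range_succ']
  have hz : ∀ k ∈ Finset.range q, aeval x (PP F (q+2) (k+1+1)) * y ^ (k+1+1) = 0 := by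
    intro k hk
    rw [show k+1+1 = k+2 from rfl,
      PP_char_mid (q+2) k (by have := Finset.mem_range.mp hk; omega), map_zero, zero_mul]
  rw [Finset.sum_eq_zero hz, PP_char_one (q+2), map_one, one_mul, PP_zero_right, map_pow,
    aeval_X, pow_zero, mul_one]
  rw [zero_add, pow_one]
  abel

lemma key_pow_sub (F : Type) [Field F] {A : Type} [Ring A] [Algebra F A] (p : ℕ)
    [hp : Fact p.Prime] [CharP F p] (x y : A) (h : y * x = x * y + y) :
    (x - y) ^ p = x ^ p - y ^ p - y := by
  have hy : ((-1 : F) • y) * x = x * ((-1 : F) • y) + ((-1 : F) • y) := by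
    rw [smul_mul_assoc, mul_smul_comm, h, smul_add]
  have hk := key_pow F p x ((-1 : F) • y) hy
  rw [_root_.smul_pow, neg_one_pow_char F p, neg_one_smul F, neg_one_smul F] at hk
  rw [sub_eq_add_neg, hk]
  abel

end Key

section Quot

variable (F : Type) [Field F] (p : ℕ) (a b : F)

/-- The generator `x` of the symbol algebra. -/
noncomputable def SGenX : SymbolAlg F p a b :=
  RingQuot.mkAlgHom F (SymbolRel F p a b) (FreeAlgebra.ι F 0)

/-- The generator `y` of the symbol algebra. -/
noncomputable def SGenY : SymbolAlg F p a b :=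
  RingQuot.mkAlgHom F (SymbolRel F p a b) (FreeAlgebra.ι F 1)

lemma SGen_rel_x : (SGenX F p a b) ^ p - SGenX F p a b = algebraMap F _ a := by
  have h := RingQuot.mkAlgHom_rel F (SymbolRel.x (F := F) (p := p) (a := a) (b := b))
  rw [map_sub, map_pow, AlgHom.commutes] at h
  exact h

lemma SGen_rel_y : (SGenY F p a b) ^ p = algebraMap F _ b := by
  have h := RingQuot.mkAlgHom_rel F (SymbolRel.y (F := F) (p := p) (a := a) (b := b))
  rw [map_pow, AlgHom.commutes] at h
  exact h

lemma SGen_rel_comm :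
    SGenY F p a b * SGenX F p a b = SGenX F p a b * SGenY F p a b + SGenY F p a b := by
  have h := RingQuot.mkAlgHom_rel F (SymbolRel.comm (F := F) (p := p) (a := a) (b := b))
  rw [map_sub, map_mul, map_mul, sub_eq_iff_eq_add] at h
  unfold SGenY SGenX
  rw [h, add_comm]

variable {a' b' : F} (u v : SymbolAlg F p a' b')
  (w : ∀ ⦃x y : FreeAlgebra F (Fin 2)⦄, SymbolRel F p a b x y →
    FreeAlgebra.lift F ![u, v] x = FreeAlgebra.lift F ![u, v] y)

/-- Algebra hom between symbol algebras determined by images of the generators. -/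
noncomputable def SHom : SymbolAlg F p a b →ₐ[F] SymbolAlg F p a' b' :=
  RingQuot.liftAlgHom F ⟨FreeAlgebra.lift F ![u, v], w⟩

lemma SHom_X : SHom F p a b u v w (SGenX F p a b) = u := by
  rw [SHom, SGenX, RingQuot.liftAlgHom_mkAlgHom_apply, FreeAlgebra.lift_ι_apply]
  simp

lemma SHom_Y : SHom F p a b u v w (SGenY F p a b) = v := by
  rw [SHom, SGenY, RingQuot.liftAlgHom_mkAlgHom_apply, FreeAlgebra.lift_ι_apply]
  simp

/-- The condition to get a hom out of the symbol algebra. -/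
lemma SHom_cond (h1 : u ^ p - u = algebraMap F _ a) (h2 : v ^ p = algebraMap F _ b)
    (h3 : v * u = u * v + v) :
    ∀ ⦃x y : FreeAlgebra F (Fin 2)⦄, SymbolRel F p a b x y →
      FreeAlgebra.lift F ![u, v] x = FreeAlgebra.lift F ![u, v] y := by
  intro x y r
  induction r with
  | x =>
    simpa only [map_sub, map_pow, FreeAlgebra.lift_ι_apply, Matrix.cons_val_zero,
      AlgHom.commutes] using h1
  | y =>
    simpa only [map_pow, FreeAlgebra.lift_ι_apply, Matrix.cons_val_one, Matrix.head_cons,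
      Matrix.cons_val_zero, AlgHom.commutes] using h2
  | comm =>
    simp only [map_sub, map_mul, FreeAlgebra.lift_ι_apply, Matrix.cons_val_zero,
      Matrix.cons_val_one, Matrix.head_cons]
    rw [h3]
    exact add_sub_cancel_left _ _

end Quot

/-- `[α,β)_{p,F} ≅ [α+β,β)_{p,F}`. -/
theorem symbol_add_beta_left (p : ℕ) (hp : p.Prime) (F : Type) [Field F] [CharP F p]
    (α β : F) (hβ : β ≠ 0) :
    Nonempty (SymbolAlg F p α β ≃ₐ[F] SymbolAlg F p (α + β) β) := by
  have hfact : Fact p.Prime := ⟨hp⟩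
  -- generators
  have rc1 := SGen_rel_comm F p α β
  have rc2 := SGen_rel_comm F p (α + β) β
  set X1 := SGenX F p α β with hX1
  set Y1 := SGenY F p α β with hY1
  set X2 := SGenX F p (α + β) β with hX2
  set Y2 := SGenY F p (α + β) β with hY2
  -- key identities
  have k2 : (X2 - Y2) ^ p - (X2 - Y2) = algebraMap F _ α := by
    rw [key_pow_sub F p X2 Y2 rc2]
    have h : X2 ^ p - Y2 ^ p - Y2 - (X2 - Y2) = (X2 ^ p - X2) - Y2 ^ p := by abel
    rw [h, SGen_rel_x, SGen_rel_y, ← map_sub, add_sub_cancel_right]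
  have k1 : (X1 + Y1) ^ p - (X1 + Y1) = algebraMap F _ (α + β) := by
    rw [key_pow F p X1 Y1 rc1]
    have h : X1 ^ p + Y1 ^ p + Y1 - (X1 + Y1) = (X1 ^ p - X1) + Y1 ^ p := by abel
    rw [h, SGen_rel_x, SGen_rel_y, ← map_add]
  -- the two homs
  have w1 := SHom_cond F p α β (X2 - Y2) Y2 k2 (SGen_rel_y F p (α + β) β)
    (by rw [mul_sub, sub_mul, rc2]; abel)
  have w2 := SHom_cond F p (α + β) β (X1 + Y1) Y1 k1 (SGen_rel_y F p α β)
    (by rw [mul_add, add_mul, rc1]; abel)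
  refine ⟨AlgEquiv.ofAlgHom (SHom F p α β (X2 - Y2) Y2 w1) (SHom F p (α + β) β (X1 + Y1) Y1 w2)
    ?_ ?_⟩
  · apply RingQuot.ringQuot_ext'
    apply FreeAlgebra.hom_ext
    funext i
    fin_cases i
    · show (SHom F p α β _ _ w1) ((SHom F p (α + β) β _ _ w2) X2) = X2
      rw [SHom_X, map_add, SHom_X, SHom_Y, sub_add_cancel]
    · show (SHom F p α β _ _ w1) ((SHom F p (α + β) β _ _ w2) Y2) = Y2
      rw [SHom_Y, SHom_Y]
  · apply RingQuot.ringQuot_ext'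
    apply FreeAlgebra.hom_ext
    funext i
    fin_cases i
    · show (SHom F p (α + β) β _ _ w2) ((SHom F p α β _ _ w1) X1) = X1
      rw [SHom_X, map_sub, SHom_X, SHom_Y, add_sub_cancel_right]
    · show (SHom F p (α + β) β _ _ w2) ((SHom F p α β _ _ w1) Y1) = Y1
      rw [SHom_Y, SHom_Y]
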